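/- Let k be a field of characteristic zero and let (C, d) be the cochain complex of k-vector spaces with basis {u^a y^b : a, b ≥ 0} in degree 2a + 2b and {u^a y^b x : a, b ≥ 0} in degree 2a + 2b + 1, with differential determined by d(u^a y^b) = b · u^{a+1} y^{b-1} x and d(u^a y^b x) = 0. Then H^0(C) ≅ k (spanned by 1), H^{2n}(C) ≅ k for every n ≥ 1 (spanned by the class of u^n), and H^{2n+1}(C) ≅ k for every n ≥ 0 (spanned by the class of y^n x). -/

import Mathlib

noncomputable section

/-- Index set for the basis of the complex in degree `n`: pairs `(a, b)` with
`u^a y^b` in degree `2a + 2b = n` (even case) or `u^a y^b x` in degree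
`2a + 2b + 1 = n` (odd case). -/
def BIdx (n : ℕ) : Type :=
  {p : ℕ × ℕ // 2 * p.1 + 2 * p.2 = n ∨ 2 * p.1 + 2 * p.2 + 1 = n}

variable (k : Type) [Field k] [CharZero k]

/-- The degree `n` part of the complex: the free `k`-module on `BIdx n`. -/
def Cdeg (n : ℕ) : Type := BIdx n →₀ k

instance (n : ℕ) : AddCommGroup (Cdeg k n) :=
  inferInstanceAs (AddCommGroup (BIdx n →₀ k))

instance (n : ℕ) : Module k (Cdeg k n) :=
  inferInstanceAs (Module k (BIdx n →₀ k))

/-- Value of the differential on a basis element: `d(u^a y^b) = b • u^(a+1) y^(b-1) x`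
and `d(u^a y^b x) = 0`. -/
def dBasis {n : ℕ} (p : BIdx n) : Cdeg k (n + 1) :=
  if h : 2 * p.1.1 + 2 * p.1.2 = n ∧ 0 < p.1.2 then
    (p.1.2 : k) • Finsupp.single ⟨(p.1.1 + 1, p.1.2 - 1), by omega⟩ (1 : k)
  else 0

/-- The basis vector of `Cdeg k n` indexed by `p`. -/
def gen (n : ℕ) (p : BIdx n) : Cdeg k n := Finsupp.single p (1 : k)

/-- The differential of the complex. -/
def dMap (n : ℕ) : Cdeg k n →ₗ[k] Cdeg k (n + 1) :=
  Finsupp.linearCombination k (dBasis k)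

set_option linter.unusedSectionVars false
open scoped Classical

/-- coefficient extraction (identity up to defeq) -/
def coeff {n : ℕ} (z : Cdeg k n) : BIdx n →₀ k := z

lemma cext {n : ℕ} {z w : Cdeg k n} (h : ∀ q, coeff k z q = coeff k w q) : z = w :=
  Finsupp.ext h

lemma dMap_gen (n : ℕ) (p : BIdx n) : dMap k n (gen k n p) = dBasis k p := by
  show Finsupp.linearCombination k (dBasis k) (Finsupp.single p 1) = dBasis k p
  rw [Finsupp.linearCombination_single, one_smul]

lemma dMap_eq_sum (n : ℕ) (z : Cdeg k n) :
    dMap k n z = (coeff k z).sum fun p c => c • dBasis k p := by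
  exact Finsupp.linearCombination_apply k z

lemma dMap_apply (n : ℕ) (z : Cdeg k n) (r : BIdx (n+1)) :
    coeff k (dMap k n z) r = (coeff k z).sum fun p c => c * coeff k (dBasis k p) r := by
  show ((coeff k z).sum fun p c => c • coeff k (dBasis k p)) r = _
  rw [Finsupp.sum_apply]
  rfl

lemma coeff_gen (n : ℕ) (p q : BIdx n) :
    coeff k (gen k n p) q = if p = q then 1 else 0 := by
  show (Finsupp.single p (1:k)) q = _
  rw [Finsupp.single_apply]

lemma coeff_smul (n : ℕ) (c : k) (z : Cdeg k n) (q : BIdx n) :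
    coeff k (c • z) q = c * coeff k z q := rfl

lemma dBasis_ne {n : ℕ} (p : BIdx n) (h : ¬ (2 * p.1.1 + 2 * p.1.2 = n ∧ 0 < p.1.2)) :
    dBasis k p = 0 := dif_neg h

lemma dBasis_eq {n : ℕ} (p : BIdx n) (hp : 2 * p.1.1 + 2 * p.1.2 = n) (hb : 0 < p.1.2) :
    dBasis k p
      = (p.1.2 : k) • gen k (n+1) ⟨(p.1.1 + 1, p.1.2 - 1), by omega⟩ := by
  exact dif_pos ⟨hp, hb⟩

lemma coeff_dBasis_zero {n : ℕ} (p : BIdx n) (r : BIdx (n+1))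
    (h : ¬(2 * p.1.1 + 2 * p.1.2 = n ∧ 0 < p.1.2 ∧ r.1.1 = p.1.1 + 1 ∧ r.1.2 = p.1.2 - 1)) :
    coeff k (dBasis k p) r = 0 := by
  by_cases hc : 2 * p.1.1 + 2 * p.1.2 = n ∧ 0 < p.1.2
  · erw [dBasis_eq k p hc.1 hc.2, coeff_smul, coeff_gen, if_neg, mul_zero]
    intro he
    apply h
    refine ⟨hc.1, hc.2, ?_, ?_⟩ <;> rw [← he]
  · rw [dBasis_ne k p hc]; rfl

lemma ker_even {n : ℕ} (z : Cdeg k n) (hz : dMap k n z = 0) (q : BIdx n)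
    (hq : 2 * q.1.1 + 2 * q.1.2 = n) (hb : 0 < q.1.2) : coeff k z q = 0 := by
  set r : BIdx (n+1) := ⟨(q.1.1 + 1, q.1.2 - 1), by omega⟩ with hr
  have h0 : coeff k (dMap k n z) r = 0 := by rw [hz]; rfl
  rw [dMap_apply, Finsupp.sum] at h0
  rw [Finset.sum_eq_single q] at h0
  · -- h0 : coeff z q * coeff (dBasis q) r = 0
    have hd : coeff k (dBasis k q) r = (q.1.2 : k) := by
      erw [dBasis_eq k q hq hb, coeff_smul, coeff_gen, if_pos (by rw [hr]), mul_one]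
    rw [hd, mul_comm] at h0
    have : (q.1.2 : k) ≠ 0 := Nat.cast_ne_zero.mpr (by omega)
    exact (mul_eq_zero.mp h0).resolve_left this
  · intro p _ hpq
    rw [coeff_dBasis_zero, mul_zero]
    rintro ⟨h1, h2, h3, h4⟩
    have h3' : q.1.1 + 1 = p.1.1 + 1 := h3
    have h4' : q.1.2 - 1 = p.1.2 - 1 := h4
    exact hpq (Subtype.ext (Prod.ext (by omega) (by omega)))
  · intro hq'
    rw [Finsupp.notMem_support_iff.mp hq', zero_mul]

/-- the differential vanishes in odd degrees -/
lemma dMap_odd (m : ℕ) (z : Cdeg k (2*m+1)) : dMap k (2*m+1) z = 0 := by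
  rw [dMap_eq_sum, Finsupp.sum]
  apply Finset.sum_eq_zero
  intro p _
  rw [dBasis_ne, smul_zero]
  have := p.2
  omega

/-- coefficients of boundaries vanish on indices with first coordinate 0 -/
lemma coeff_dMap_fst_zero (n : ℕ) (z : Cdeg k n) (r : BIdx (n+1)) (hr : r.1.1 = 0) :
    coeff k (dMap k n z) r = 0 := by
  rw [dMap_apply, Finsupp.sum]
  apply Finset.sum_eq_zero
  intro p _
  rw [coeff_dBasis_zero, mul_zero]
  rintro ⟨_, _, h3, _⟩
  omega

/-- contracting homotopy on basis elements of odd degree -/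
def sBasis (m : ℕ) (p : BIdx (2*m+1)) : Cdeg k (2*m) :=
  if h : 0 < p.1.1 then
    ((p.1.2 + 1 : ℕ) : k)⁻¹ •
      Finsupp.single (⟨(p.1.1 - 1, p.1.2 + 1), by have := p.2; omega⟩ : BIdx (2*m)) (1 : k)
  else 0

/-- `Finsupp.single` regarded as landing in `Cdeg`. -/
def sgl (n : ℕ) (q : BIdx n) (c : k) : Cdeg k n := Finsupp.single q c

def sMap (m : ℕ) : Cdeg k (2*m+1) →ₗ[k] Cdeg k (2*m) :=
  Finsupp.linearCombination k (sBasis k m)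

lemma split_lemma (m : ℕ) (z : Cdeg k (2*m+1)) :
    dMap k (2*m) (sMap k m z)
      = z - coeff k z ⟨(0, m), Or.inr (by omega)⟩ • gen k (2*m+1) ⟨(0, m), Or.inr (by omega)⟩ := by
  have key : (dMap k (2*m)).comp (sMap k m)
      = LinearMap.id - ((Finsupp.lsingle (⟨(0, m), Or.inr (by omega)⟩ : BIdx (2*m+1))).comp
          (Finsupp.lapply (⟨(0, m), Or.inr (by omega)⟩ : BIdx (2*m+1)))
            : Cdeg k (2*m+1) →ₗ[k] Cdeg k (2*m+1)) := by
    apply Finsupp.lhom_ext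
    intro p c
    set q₀ : BIdx (2*m+1) := ⟨(0, m), Or.inr (by omega)⟩ with hq₀
    have hs : sMap k m (Finsupp.single p c) = c • sBasis k m p := by
      show Finsupp.linearCombination k (sBasis k m) (Finsupp.single p c) = _
      rw [Finsupp.linearCombination_single]
    show dMap k (2*m) (sMap k m (Finsupp.single p c))
        = Finsupp.single p c
          - Finsupp.single q₀ (coeff k ((Finsupp.single p c : BIdx (2*m+1) →₀ k) : Cdeg k (2*m+1)) q₀)
    rw [hs, map_smul]
    by_cases h : 0 < p.1.1
    · have hp2 : 2 * p.1.1 + 2 * p.1.2 + 1 = 2*m+1 := by have := p.2; omega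
      set q : BIdx (2*m) := ⟨(p.1.1 - 1, p.1.2 + 1), by have := p.2; omega⟩ with hq
      have hsb : sBasis k m p = ((p.1.2 + 1 : ℕ) : k)⁻¹ • gen k (2*m) q := by
        exact dif_pos h
      have hdq : dBasis k q = ((p.1.2 + 1 : ℕ) : k) • gen k (2*m+1) p := by
        rw [dBasis_eq k q (show 2*(p.1.1-1) + 2*(p.1.2+1) = 2*m by omega)
          (show 0 < p.1.2+1 by omega)]
        congr 2
        exact (Subtype.ext (Prod.ext
          (show p.1.1 - 1 + 1 = p.1.1 by omega)
          (show p.1.2 + 1 - 1 = p.1.2 by omega)))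
      have hcast : ((p.1.2 + 1 : ℕ) : k) ≠ 0 := Nat.cast_ne_zero.mpr (by omega)
      have hne : p ≠ q₀ := by
        intro he
        have : p.1.1 = 0 := by rw [he]
        omega
      have hcz : coeff k ((Finsupp.single p c : BIdx (2*m+1) →₀ k) : Cdeg k (2*m+1)) q₀ = 0 :=
        Finsupp.single_eq_of_ne hne.symm
      rw [hcz, Finsupp.single_zero, sub_zero, hsb, map_smul,
        dMap_gen, hdq, smul_smul, smul_smul, mul_assoc, inv_mul_cancel₀ hcast, mul_one]
      show c • Finsupp.single p (1:k) = _
      rw [Finsupp.smul_single, smul_eq_mul, mul_one]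
    · have hp : p = q₀ := by
        apply Subtype.ext
        show p.1 = ((0:ℕ), m)
        have := p.2
        exact Prod.ext (by omega) (by omega)
      have hsb : sBasis k m p = 0 := by exact dif_neg h
      have hcz : coeff k ((Finsupp.single p c : BIdx (2*m+1) →₀ k) : Cdeg k (2*m+1)) q₀ = c := by
        rw [hp]; exact Finsupp.single_eq_same
      rw [hsb, map_zero, smul_zero, hcz, hp]
      exact (sub_self _).symm
  have h1 : dMap k (2*m) (sMap k m z)
      = z - sgl k (2*m+1) ⟨(0, m), Or.inr (by omega)⟩
          (coeff k z ⟨(0, m), Or.inr (by omega)⟩) := LinearMap.congr_fun key z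
  refine h1.trans ?_
  congr 1
  show Finsupp.single (⟨(0, m), Or.inr (by omega)⟩ : BIdx (2*m+1)) (coeff k z ⟨(0, m), Or.inr (by omega)⟩)
      = coeff k z ⟨(0, m), Or.inr (by omega)⟩ • Finsupp.single (⟨(0, m), Or.inr (by omega)⟩ : BIdx (2*m+1)) (1:k)
  rw [Finsupp.smul_single, smul_eq_mul, mul_one]

lemma gen_ne_zero (n : ℕ) (p : BIdx n) : gen k n p ≠ 0 := by
  intro h
  have h0 : coeff k (gen k n p) p = 0 := by rw [h]; rfl
  rw [coeff_gen, if_pos rfl] at h0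
  exact one_ne_zero h0

/-- the cochain complex with basis `{u^a y^b}` in degree `2a+2b` and
`{u^a y^b x}` in degree `2a+2b+1`, and differential `d(u^a y^b) = b·u^(a+1) y^(b-1) x`,
`d(u^a y^b x) = 0`, has `H⁰ ≅ k` spanned by `1`, `H^{2n} ≅ k` spanned by the class of
`u^n` for `n ≥ 1`, and `H^{2n+1} ≅ k` spanned by the class of `y^n x` for `n ≥ 0`.
(Each cohomology being one-dimensional spanned by the indicated class is expressed
elementwise: the indicated element is a cocycle, every cocycle agrees with a scalar
multiple of it up to a coboundary, and it is not itself a coboundary.) -/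
theorem stmt_1 :
    -- `H⁰ ≅ k`, spanned by `1 = u^0 y^0`:
    (gen k 0 ⟨(0, 0), by omega⟩ ∈ LinearMap.ker (dMap k 0) ∧
      (∀ z ∈ LinearMap.ker (dMap k 0),
        ∃ c : k, z = c • gen k 0 ⟨(0, 0), by omega⟩) ∧
      gen k 0 ⟨(0, 0), by omega⟩ ≠ 0) ∧
    -- `H^{2n} ≅ k` for `n = m + 1 ≥ 1`, spanned by the class of `u^n`:
    (∀ m : ℕ,
      gen k (2 * m + 1 + 1) ⟨(m + 1, 0), by omega⟩ ∈
          LinearMap.ker (dMap k (2 * m + 1 + 1)) ∧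
      (∀ z ∈ LinearMap.ker (dMap k (2 * m + 1 + 1)),
        ∃ c : k, z - c • gen k (2 * m + 1 + 1) ⟨(m + 1, 0), by omega⟩ ∈
          LinearMap.range (dMap k (2 * m + 1))) ∧
      gen k (2 * m + 1 + 1) ⟨(m + 1, 0), by omega⟩ ∉
        LinearMap.range (dMap k (2 * m + 1))) ∧
    -- `H^{2n+1} ≅ k` for `n ≥ 0`, spanned by the class of `y^n x`:
    (∀ m : ℕ,
      gen k (2 * m + 1) ⟨(0, m), by omega⟩ ∈
          LinearMap.ker (dMap k (2 * m + 1)) ∧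
      (∀ z ∈ LinearMap.ker (dMap k (2 * m + 1)),
        ∃ c : k, z - c • gen k (2 * m + 1) ⟨(0, m), by omega⟩ ∈
          LinearMap.range (dMap k (2 * m))) ∧
      gen k (2 * m + 1) ⟨(0, m), by omega⟩ ∉
        LinearMap.range (dMap k (2 * m))) := by
  refine ⟨⟨?_, ?_, gen_ne_zero k 0 _⟩,
    fun m => ⟨?_, ?_, ?_⟩, fun m => ⟨?_, ?_, ?_⟩⟩
  · -- 1 is a cocycle
    refine LinearMap.mem_ker.mpr ?_
    erw [dMap_gen]
    exact dBasis_ne k _ (fun hc => Nat.lt_irrefl 0 hc.2)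
  · -- every 0-cocycle is a multiple of 1
    intro z _
    refine ⟨coeff k z ⟨(0, 0), by omega⟩, cext k fun q => ?_⟩
    have h1 : q.1.1 = 0 := by have := q.2; omega
    have h2 : q.1.2 = 0 := by have := q.2; omega
    have hq : q = ⟨(0, 0), by omega⟩ := Subtype.ext (Prod.ext h1 h2)
    erw [hq, coeff_smul, coeff_gen, if_pos rfl, mul_one]
  · -- u^(m+1) is a cocycle
    refine LinearMap.mem_ker.mpr ?_
    erw [dMap_gen]
    exact dBasis_ne k _ (fun hc => Nat.lt_irrefl 0 hc.2)
  · -- every even cocycle is a multiple of u^(m+1) mod boundaries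
    intro z hz
    refine ⟨coeff k z ⟨(m + 1, 0), by omega⟩, ?_⟩
    have hzz : z = coeff k z ⟨(m + 1, 0), by omega⟩ •
        gen k (2 * m + 1 + 1) ⟨(m + 1, 0), by omega⟩ := by
      apply cext
      intro q
      by_cases hb : q.1.2 = 0
      · have h1 : q.1.1 = m + 1 := by have := q.2; omega
        have hq : q = ⟨(m + 1, 0), by omega⟩ := Subtype.ext (Prod.ext h1 hb)
        erw [hq, coeff_smul, coeff_gen, if_pos rfl, mul_one]
      · erw [coeff_smul, coeff_gen, if_neg (fun he => hb (by rw [← he])), mul_zero]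
        exact ker_even k z (LinearMap.mem_ker.mp hz) q (by have := q.2; omega) (by omega)
    rw [sub_eq_zero_of_eq hzz]
    exact Submodule.zero_mem _
  · -- u^(m+1) is not a coboundary
    rintro ⟨w, hw⟩
    rw [dMap_odd k m w] at hw
    exact gen_ne_zero k _ _ hw.symm
  · -- y^m x is a cocycle
    exact LinearMap.mem_ker.mpr (dMap_odd k m _)
  · -- every odd cocycle is a multiple of y^m x mod boundaries
    intro z _
    exact ⟨coeff k z ⟨(0, m), by omega⟩, ⟨sMap k m z, split_lemma k m z⟩⟩
  · -- y^m x is not a coboundary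
    rintro ⟨w, hw⟩
    have h0 := coeff_dMap_fst_zero k (2 * m) w ⟨(0, m), by omega⟩ rfl
    erw [hw, coeff_gen, if_pos rfl] at h0
    exact one_ne_zero h0


end
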